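/- arXiv:1709.06367 — 2 statements merged into one kernel-verified Lean document; each statement's English description precedes it below -/
import Mathlib

section
/- Let s₆ ≈ 2.154 be the unique root in the interval (2,3) of s⁴ − 3s³ + 3s² − 3s + 1 = 0. For every real s with 2 ≤ s ≤ s₆, every instance of the favorite-machine scheduling game on two machines with parameter s, and every allocation x that is a strong equilibrium, the makespan of x is at most (s² − s + 1)/(s² − s) times the optimal makespan. -/
open Finset

/-- Processing time of job `j` on machine `i` in the favorite-machine model:
`q j` on the favorite machine `f j` and `s * q j` on the other machine. -/
noncomputable def ptime (s : ℝ) {n : ℕ} (q : Fin n → ℝ) (f : Fin n → Fin 2)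
    (i : Fin 2) (j : Fin n) : ℝ :=
  if f j = i then q j else s * q j

/-- Load of machine `i` under allocation `x`. -/
noncomputable def load (s : ℝ) {n : ℕ} (q : Fin n → ℝ) (f : Fin n → Fin 2)
    (x : Fin n → Fin 2) (i : Fin 2) : ℝ :=
  ∑ j ∈ Finset.univ.filter (fun j => x j = i), ptime s q f i j

/-- Makespan (maximum load) of allocation `x`. -/
noncomputable def makespan (s : ℝ) {n : ℕ} (q : Fin n → ℝ) (f : Fin n → Fin 2)
    (x : Fin n → Fin 2) : ℝ :=
  max (load s q f x 0) (load s q f x 1)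

/-- The optimal (minimum) makespan over all allocations. -/
noncomputable def optMakespan (s : ℝ) {n : ℕ} (q : Fin n → ℝ) (f : Fin n → Fin 2) : ℝ :=
  ⨅ y : Fin n → Fin 2, makespan s q f y

/-- Pure Nash equilibrium: no job can move to the other machine and find there
a load smaller than its current cost. -/
def IsNE (s : ℝ) {n : ℕ} (q : Fin n → ℝ) (f : Fin n → Fin 2)
    (x : Fin n → Fin 2) : Prop :=
  ∀ j : Fin n, ∀ i : Fin 2, i ≠ x j →
    load s q f x (x j) ≤ load s q f (Function.update x j i) i

/-- Strong equilibrium: for every deviation `y` differing from `x` on a nonempty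
set of jobs, some deviating job does not improve its cost. -/
def IsSE (s : ℝ) {n : ℕ} (q : Fin n → ℝ) (f : Fin n → Fin 2)
    (x : Fin n → Fin 2) : Prop :=
  ∀ y : Fin n → Fin 2, (∃ j, y j ≠ x j) →
    ∃ j, y j ≠ x j ∧ load s q f x (x j) ≤ load s q f y (y j)

section helpers

lemma fin2_eq_of_ne {i t o : Fin 2} (hto : t ≠ o) (h : i ≠ t) : i = o := by
  have h1 := i.isLt; have h2 := t.isLt; have h3 := o.isLt
  have h4 : i.val ≠ t.val := fun hh => h (Fin.ext hh)
  have h5 : t.val ≠ o.val := fun hh => hto (Fin.ext hh)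
  apply Fin.ext; omega

variable {n : ℕ} (s : ℝ) (q : Fin n → ℝ) (f : Fin n → Fin 2)

lemma load_eq (x : Fin n → Fin 2) (i : Fin 2) :
    load s q f x i = ∑ j ∈ univ, if x j = i then ptime s q f i j else 0 := by
  rw [load, sum_filter]

lemma sum_finset_eq (A : Finset (Fin n)) (g : Fin n → ℝ) :
    ∑ j ∈ A, g j = ∑ j ∈ univ, if j ∈ A then g j else 0 := by
  rw [Finset.sum_ite_mem, univ_inter]

lemma load_swap (x : Fin n → Fin 2) (t o : Fin 2) (hto : t ≠ o)
    (A B : Finset (Fin n)) (hA : ∀ j ∈ A, x j = t) (hB : ∀ j ∈ B, x j = o) :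
    load s q f (fun j => if j ∈ A then o else if j ∈ B then t else x j) t
      = load s q f x t - ∑ j ∈ A, ptime s q f t j + ∑ j ∈ B, ptime s q f t j ∧
    load s q f (fun j => if j ∈ A then o else if j ∈ B then t else x j) o
      = load s q f x o + ∑ j ∈ A, ptime s q f o j - ∑ j ∈ B, ptime s q f o j := by
  constructor
  · rw [load_eq, load_eq, sum_finset_eq _ (fun j => ptime s q f t j),
      sum_finset_eq _ (fun j => ptime s q f t j), ← sum_sub_distrib, ← sum_add_distrib]
    refine sum_congr rfl fun j _ => ?_
    by_cases hjA : j ∈ A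
    · have hx := hA j hjA
      have hjB : j ∉ B := fun hjB => hto (by rw [← hA j hjA, hB j hjB])
      simp [hjA, hjB, hx, Ne.symm hto, hto]
    · by_cases hjB : j ∈ B
      · have hx := hB j hjB
        have : x j ≠ t := by rw [hx]; exact Ne.symm hto
        simp [hjA, hjB, this]
      · simp [hjA, hjB]
  · rw [load_eq, load_eq, sum_finset_eq _ (fun j => ptime s q f o j),
      sum_finset_eq _ (fun j => ptime s q f o j), ← sum_add_distrib, ← sum_sub_distrib]
    refine sum_congr rfl fun j _ => ?_
    by_cases hjA : j ∈ A
    · have hx := hA j hjA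
      have hjB : j ∉ B := fun hjB => hto (by rw [← hA j hjA, hB j hjB])
      have : x j ≠ o := by rw [hx]; exact hto
      simp [hjA, hjB, this]
    · by_cases hjB : j ∈ B
      · have hx := hB j hjB
        simp [hjA, hjB, hx, hto, Ne.symm hto]
      · simp [hjA, hjB]

lemma se_master (x : Fin n → Fin 2) (hx : IsSE s q f x) (t o : Fin 2) (hto : t ≠ o)
    (A B : Finset (Fin n)) (hA : ∀ j ∈ A, x j = t) (hB : ∀ j ∈ B, x j = o)
    (hAne : A.Nonempty) :
    load s q f x t ≤ load s q f (fun j => if j ∈ A then o else if j ∈ B then t else x j) o ∨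
    (B.Nonempty ∧ load s q f x o ≤
      load s q f (fun j => if j ∈ A then o else if j ∈ B then t else x j) t) := by
  set y : Fin n → Fin 2 := fun j => if j ∈ A then o else if j ∈ B then t else x j with hy
  obtain ⟨j₀, hj₀⟩ := hAne
  have hdev : ∃ j, y j ≠ x j := by
    refine ⟨j₀, ?_⟩
    simp only [hy, if_pos hj₀, hA j₀ hj₀]
    exact Ne.symm hto
  obtain ⟨j, hjne, hjle⟩ := hx y hdev
  by_cases hjA : j ∈ A
  · left
    have h1 : x j = t := hA j hjA
    have h2 : y j = o := by simp [hy, hjA]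
    rwa [h1, h2] at hjle
  · by_cases hjB : j ∈ B
    · right
      refine ⟨⟨j, hjB⟩, ?_⟩
      have h1 : x j = o := hB j hjB
      have h2 : y j = t := by simp [hy, hjA, hjB]
      rwa [h1, h2] at hjle
    · exact absurd (by simp [hy, hjA, hjB]) hjne

variable (hs : 2 ≤ s) (hq : ∀ j, 0 < q j)
include hs hq

lemma ptime_pos (i : Fin 2) (j : Fin n) : 0 < ptime s q f i j := by
  unfold ptime; split
  · exact hq j
  · nlinarith [hq j]

lemma ptime_le (i i' : Fin 2) (j : Fin n) : ptime s q f i' j ≤ s * ptime s q f i j := by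
  have h1 := (hq j).le
  have h2 : (0:ℝ) ≤ s := by linarith
  have h3 : (0:ℝ) ≤ s - 1 := by linarith
  unfold ptime
  split <;> split <;>
    nlinarith [mul_nonneg h3 h1, mul_nonneg (mul_nonneg h3 h2) h1, hq j]

end helpers

set_option maxHeartbeats 2000000 in
lemma core {n : ℕ} (s : ℝ) (hs : 2 ≤ s) (hq4 : s^4 - 3*s^3 + 3*s^2 - 3*s + 1 ≤ 0)
    (q : Fin n → ℝ) (hq : ∀ j, 0 < q j) (f : Fin n → Fin 2)
    (x : Fin n → Fin 2) (hx : IsSE s q f x)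
    (O : ℝ) (w : Fin n → Fin 2) (hwO : ∀ i, load s q f w i ≤ O)
    (t o : Fin 2) (hto : t ≠ o) (hlo : load s q f x o ≤ load s q f x t) :
    (s^2 - s) * load s q f x t ≤ (s^2 - s + 1) * O := by
  by_contra hcon
  push_neg at hcon
  have hs0 : (0:ℝ) < s := by linarith
  have hs1 : (1:ℝ) < s := by linarith
  have hss : (0:ℝ) < s^2 - s := by nlinarith
  have hs21 : s^2 - 2*s - 1 ≤ 0 := by nlinarith [sq_nonneg (s-1)]
  have hs32 : s^3 - 2*s^2 - 1 ≤ 0 := by nlinarith [sq_nonneg (s-1)]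
  have hs31 : s^2 - 3*s + 1 ≤ 0 := by nlinarith [sq_nonneg (s-1)]
  set Lt := load s q f x t with hLtdef
  set Lo := load s q f x o with hLodef
  have hptpos : ∀ (i : Fin 2) (j : Fin n), 0 < ptime s q f i j := ptime_pos s q f hs hq
  have hLt0 : 0 ≤ Lt := Finset.sum_nonneg fun j _ => (hptpos t j).le
  have hLo0 : 0 ≤ Lo := Finset.sum_nonneg fun j _ => (hptpos o j).le
  have hO0 : 0 ≤ O := le_trans (Finset.sum_nonneg fun j _ => (hptpos (0:Fin 2) j).le) (hwO 0)
  have hLtO : O < Lt := by nlinarith only [hcon, hO0, hss]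
  -- Step 0 : Lo ≤ O
  have hLoO : Lo ≤ O := by
    by_cases hyx : ∀ j, w j = x j
    · exfalso
      have hlw : load s q f w t = Lt := by
        rw [hLtdef, load_eq, load_eq]
        exact sum_congr rfl fun j _ => by rw [hyx j]
      have := hwO t
      rw [hlw] at this
      linarith
    · push_neg at hyx
      obtain ⟨j, hjne⟩ := hyx
      obtain ⟨j', hj'ne, hj'le⟩ := hx w ⟨j, hjne⟩
      rcases eq_or_ne (x j') t with hxt | hxt
      · exfalso
        rw [hxt] at hj'le
        have := le_trans hj'le (hwO (w j'))
        linarith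
      · have hxo : x j' = o := fin2_eq_of_ne hto hxt
        rw [hxo] at hj'le
        exact le_trans hj'le (hwO (w j'))
  have hDelta : O < (s^2 - s) * (Lt - Lo) := by
    nlinarith only [hcon, mul_le_mul_of_nonneg_left hLoO hss.le]
  -- Finsets
  set A1 : Finset (Fin n) := univ.filter (fun j => x j = t ∧ w j = o ∧ f j = t) with hA1def
  set A2 : Finset (Fin n) := univ.filter (fun j => x j = t ∧ w j = o ∧ f j = o) with hA2def
  set At : Finset (Fin n) := univ.filter (fun j => x j = t ∧ w j = o) with hAtdef
  set Bt : Finset (Fin n) := univ.filter (fun j => x j = o ∧ w j = t) with hBtdef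
  set B1 : Finset (Fin n) := univ.filter (fun j => x j = o ∧ w j = t ∧ f j = t) with hB1def
  set B2 : Finset (Fin n) := univ.filter (fun j => x j = o ∧ w j = t ∧ f j = o) with hB2def
  set Kt : Finset (Fin n) := univ.filter (fun j => x j = t ∧ w j = t) with hKtdef
  set Cf : Finset (Fin n) := univ.filter (fun j => x j = o ∧ f j = t) with hCfdef
  set Df : Finset (Fin n) := univ.filter (fun j => x j = o ∧ f j = o) with hDfdef
  set a := ∑ j ∈ A1, q j with hadef
  set a' := ∑ j ∈ A2, q j with ha'def
  set b := ∑ j ∈ B1, q j with hbdef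
  set b' := ∑ j ∈ B2, q j with hb'def
  set c := ∑ j ∈ Cf, q j with hcdef
  set d := ∑ j ∈ Df, q j with hddef
  set e := ∑ j ∈ Kt, ptime s q f t j with hedef
  have ha0 : 0 ≤ a := Finset.sum_nonneg fun j _ => (hq j).le
  have ha'0 : 0 ≤ a' := Finset.sum_nonneg fun j _ => (hq j).le
  have hb0 : 0 ≤ b := Finset.sum_nonneg fun j _ => (hq j).le
  have hb'0 : 0 ≤ b' := Finset.sum_nonneg fun j _ => (hq j).le
  have hc0 : 0 ≤ c := Finset.sum_nonneg fun j _ => (hq j).le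
  have hd0 : 0 ≤ d := Finset.sum_nonneg fun j _ => (hq j).le
  have he0 : 0 ≤ e := Finset.sum_nonneg fun j _ => (hptpos t j).le
  have hbc : b ≤ c := by
    rw [hbdef, hcdef]
    apply Finset.sum_le_sum_of_subset_of_nonneg
    · rw [hB1def, hCfdef]
      intro j hj
      simp only [mem_filter, mem_univ, true_and] at hj ⊢
      exact ⟨hj.1, hj.2.2⟩
    · intro j _ _; exact (hq j).le
  have hB2D : B2 ⊆ Df := by
    rw [hB2def, hDfdef]
    intro j hj
    simp only [mem_filter, mem_univ, true_and] at hj ⊢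
    exact ⟨hj.1, hj.2.2⟩
  have hb'd : b' ≤ d := by
    rw [hb'def, hddef]
    exact Finset.sum_le_sum_of_subset_of_nonneg hB2D (fun j _ _ => (hq j).le)
  -- identities
  have hfo : ∀ j : Fin n, f j = o → ptime s q f t j = s * q j := by
    intro j hj; unfold ptime
    rw [if_neg (by rw [hj]; exact Ne.symm hto)]
  have hfo' : ∀ j : Fin n, f j = o → ptime s q f o j = q j := by
    intro j hj; unfold ptime; rw [if_pos hj]
  have hft : ∀ j : Fin n, f j = t → ptime s q f t j = q j := by
    intro j hj; unfold ptime; rw [if_pos hj]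
  have hft' : ∀ j : Fin n, f j = t → ptime s q f o j = s * q j := by
    intro j hj; unfold ptime
    rw [if_neg (by rw [hj]; exact hto)]
  have hLtid : Lt = a + s * a' + e := by
    rw [hLtdef, load_eq, hadef, ha'def, hedef, hA1def, hA2def, hKtdef,
      sum_filter, sum_filter, sum_filter, mul_sum, ← sum_add_distrib, ← sum_add_distrib]
    refine sum_congr rfl fun j _ => ?_
    by_cases h1 : x j = t
    · by_cases h2 : w j = o
      · have h2' : w j ≠ t := by rw [h2]; exact Ne.symm hto
        by_cases h3 : f j = t
        · simp [h1, h2, h3, h2', hft j h3, hto, Ne.symm hto]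
        · have h3' : f j = o := fin2_eq_of_ne hto h3
          simp [h1, h2, h3, h3', h2', hfo j h3', hto, Ne.symm hto]
      · have h2' : w j = t := fin2_eq_of_ne hto.symm h2
        simp [h1, h2, h2', hto, Ne.symm hto]
    · simp [h1, hto, Ne.symm hto]
  have hLoid : Lo = s * c + d := by
    rw [hLodef, load_eq, hcdef, hddef, hCfdef, hDfdef,
      sum_filter, sum_filter, mul_sum, ← sum_add_distrib]
    refine sum_congr rfl fun j _ => ?_
    by_cases h1 : x j = o
    · by_cases h3 : f j = t
      · have h3' : f j ≠ o := by rw [h3]; exact hto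
        simp [h1, h3, h3', hft' j h3, hto, Ne.symm hto]
      · have h3' : f j = o := fin2_eq_of_ne hto h3
        simp [h1, h3, h3', hfo' j h3', hto, Ne.symm hto]
    · simp [h1, hto, Ne.symm hto]
  have hAtt : ∑ j ∈ At, ptime s q f t j = a + s * a' := by
    rw [hadef, ha'def, hAtdef, hA1def, hA2def,
      sum_filter, sum_filter, sum_filter, mul_sum, ← sum_add_distrib]
    refine sum_congr rfl fun j _ => ?_
    by_cases h1 : x j = t
    · by_cases h2 : w j = o
      · by_cases h3 : f j = t
        · simp [h1, h2, h3, hft j h3, hto, Ne.symm hto]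
        · have h3' : f j = o := fin2_eq_of_ne hto h3
          simp [h1, h2, h3, h3', hfo j h3', hto, Ne.symm hto]
      · simp [h1, h2, hto, Ne.symm hto]
    · simp [h1, hto, Ne.symm hto]
  have hAto : ∑ j ∈ At, ptime s q f o j = s * a + a' := by
    rw [hadef, ha'def, hAtdef, hA1def, hA2def,
      sum_filter, sum_filter, sum_filter, mul_sum, ← sum_add_distrib]
    refine sum_congr rfl fun j _ => ?_
    by_cases h1 : x j = t
    · by_cases h2 : w j = o
      · by_cases h3 : f j = t
        · simp [h1, h2, h3, hft' j h3, hto, Ne.symm hto]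
        · have h3' : f j = o := fin2_eq_of_ne hto h3
          simp [h1, h2, h3, h3', hfo' j h3', hto, Ne.symm hto]
      · simp [h1, h2, hto, Ne.symm hto]
    · simp [h1, hto, Ne.symm hto]
  have hBtt : ∑ j ∈ Bt, ptime s q f t j = b + s * b' := by
    rw [hbdef, hb'def, hBtdef, hB1def, hB2def,
      sum_filter, sum_filter, sum_filter, mul_sum, ← sum_add_distrib]
    refine sum_congr rfl fun j _ => ?_
    by_cases h1 : x j = o
    · by_cases h2 : w j = t
      · by_cases h3 : f j = t
        · simp [h1, h2, h3, hft j h3, hto, Ne.symm hto]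
        · have h3' : f j = o := fin2_eq_of_ne hto h3
          simp [h1, h2, h3, h3', hfo j h3', hto, Ne.symm hto]
      · simp [h1, h2, hto, Ne.symm hto]
    · simp [h1, hto, Ne.symm hto]
  have hBto : ∑ j ∈ Bt, ptime s q f o j = s * b + b' := by
    rw [hbdef, hb'def, hBtdef, hB1def, hB2def,
      sum_filter, sum_filter, sum_filter, mul_sum, ← sum_add_distrib]
    refine sum_congr rfl fun j _ => ?_
    by_cases h1 : x j = o
    · by_cases h2 : w j = t
      · by_cases h3 : f j = t
        · simp [h1, h2, h3, hft' j h3, hto, Ne.symm hto]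
        · have h3' : f j = o := fin2_eq_of_ne hto h3
          simp [h1, h2, h3, h3', hfo' j h3', hto, Ne.symm hto]
      · simp [h1, h2, hto, Ne.symm hto]
    · simp [h1, hto, Ne.symm hto]
  have hA2t : ∑ j ∈ A2, ptime s q f t j = s * a' := by
    rw [ha'def, hA2def, sum_filter, sum_filter, mul_sum]
    refine sum_congr rfl fun j _ => ?_
    by_cases h1 : x j = t ∧ w j = o ∧ f j = o
    · simp [h1, hfo j h1.2.2, hto, Ne.symm hto]
    · simp [h1, hto, Ne.symm hto]
  have hA2o : ∑ j ∈ A2, ptime s q f o j = a' := by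
    rw [ha'def, hA2def, sum_filter, sum_filter]
    refine sum_congr rfl fun j _ => ?_
    by_cases h1 : x j = t ∧ w j = o ∧ f j = o
    · simp [h1, hfo' j h1.2.2, hto, Ne.symm hto]
    · simp [h1, hto, Ne.symm hto]
  have hCt : ∑ j ∈ Cf, ptime s q f t j = c := by
    rw [hcdef, hCfdef, sum_filter, sum_filter]
    refine sum_congr rfl fun j _ => ?_
    by_cases h1 : x j = o ∧ f j = t
    · simp [h1, hft j h1.2, hto, Ne.symm hto]
    · simp [h1, hto, Ne.symm hto]
  have hCo : ∑ j ∈ Cf, ptime s q f o j = s * c := by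
    rw [hcdef, hCfdef, sum_filter, sum_filter, mul_sum]
    refine sum_congr rfl fun j _ => ?_
    by_cases h1 : x j = o ∧ f j = t
    · simp [h1, hft' j h1.2, hto, Ne.symm hto]
    · simp [h1, hto, Ne.symm hto]
  have hDBo : ∑ j ∈ (Df \ B2), ptime s q f o j = d - b' := by
    rw [Finset.sum_sdiff_eq_sub hB2D]
    have e1 : ∑ j ∈ Df, ptime s q f o j = d := by
      rw [hddef, hDfdef, sum_filter, sum_filter]
      refine sum_congr rfl fun j _ => ?_
      by_cases h1 : x j = o ∧ f j = o
      · simp [h1, hfo' j h1.2, hto, Ne.symm hto]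
      · simp [h1, hto, Ne.symm hto]
    have e2 : ∑ j ∈ B2, ptime s q f o j = b' := by
      rw [hb'def, hB2def, sum_filter, sum_filter]
      refine sum_congr rfl fun j _ => ?_
      by_cases h1 : x j = o ∧ w j = t ∧ f j = o
      · simp [h1, hfo' j h1.2.2, hto, Ne.symm hto]
      · simp [h1, hto, Ne.symm hto]
    rw [e1, e2]
  have hDBt : ∑ j ∈ (Df \ B2), ptime s q f t j = s * (d - b') := by
    rw [Finset.sum_sdiff_eq_sub hB2D]
    have e1 : ∑ j ∈ Df, ptime s q f t j = s * d := by
      rw [hddef, hDfdef, sum_filter, sum_filter, mul_sum]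
      refine sum_congr rfl fun j _ => ?_
      by_cases h1 : x j = o ∧ f j = o
      · simp [h1, hfo j h1.2, hto, Ne.symm hto]
      · simp [h1, hto, Ne.symm hto]
    have e2 : ∑ j ∈ B2, ptime s q f t j = s * b' := by
      rw [hb'def, hB2def, sum_filter, sum_filter, mul_sum]
      refine sum_congr rfl fun j _ => ?_
      by_cases h1 : x j = o ∧ w j = t ∧ f j = o
      · simp [h1, hfo j h1.2.2, hto, Ne.symm hto]
      · simp [h1, hto, Ne.symm hto]
    rw [e1, e2]; ring
  -- w is the swap of x along At, Bt
  have hAmem : ∀ j ∈ At, x j = t := by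
    rw [hAtdef]; intro j hj; exact (mem_filter.mp hj).2.1
  have hBmem : ∀ j ∈ Bt, x j = o := by
    rw [hBtdef]; intro j hj; exact (mem_filter.mp hj).2.1
  have hweq : w = fun j => if j ∈ At then o else if j ∈ Bt then t else x j := by
    funext j
    by_cases hjA : j ∈ At
    · rw [if_pos hjA]
      rw [hAtdef] at hjA
      exact (mem_filter.mp hjA).2.2
    · rw [if_neg hjA]
      by_cases hjB : j ∈ Bt
      · rw [if_pos hjB]
        rw [hBtdef] at hjB
        exact (mem_filter.mp hjB).2.2
      · rw [if_neg hjB]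
        rw [hAtdef] at hjA; rw [hBtdef] at hjB
        simp only [mem_filter, mem_univ, true_and, not_and] at hjA hjB
        rcases eq_or_ne (x j) t with h1 | h1
        · rw [h1]
          exact fin2_eq_of_ne hto.symm (hjA h1)
        · have h1' : x j = o := fin2_eq_of_ne hto h1
          rw [h1']
          exact fin2_eq_of_ne hto (hjB h1')
  have hF12 := load_swap s q f x t o hto At Bt hAmem hBmem
  have hF1 : Lt - (a + s*a') + (b + s*b') ≤ O := by
    have h := hwO t
    rw [hweq] at h
    rw [hF12.1, hAtt, hBtt] at h
    linarith
  have hF2 : Lo + (s*a + a') - (s*b + b') ≤ O := by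
    have h := hwO o
    rw [hweq] at h
    rw [hF12.2, hAto, hBto] at h
    linarith
  -- NE
  have hNE : ∀ j, x j = t → Lt ≤ Lo + ptime s q f o j := by
    intro j hjt
    have hA : ∀ k ∈ ({j} : Finset (Fin n)), x k = t := by
      intro k hk; rw [mem_singleton.mp hk]; exact hjt
    have hB : ∀ k ∈ (∅ : Finset (Fin n)), x k = o := fun k hk => absurd hk (notMem_empty k)
    have hswap := load_swap s q f x t o hto {j} ∅ hA hB
    rcases se_master s q f x hx t o hto {j} ∅ hA hB ⟨j, mem_singleton_self j⟩ with h | h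
    · rw [hswap.2, sum_singleton, sum_empty] at h
      linarith
    · exact absurd h.1 Finset.not_nonempty_empty
  -- At nonempty, and Lt ≤ Lo + O
  have hAtne : At.Nonempty := by
    by_contra hne
    rw [Finset.not_nonempty_iff_eq_empty] at hne
    rw [hne, sum_empty] at hAtt
    nlinarith only [hAtt, hF1, hLtO, hb0, mul_nonneg hs0.le hb'0]
  obtain ⟨j₀, hj₀⟩ := hAtne
  have hj₀t : x j₀ = t := hAmem j₀ hj₀
  have hj₀w : w j₀ = o := by
    rw [hAtdef] at hj₀; exact (mem_filter.mp hj₀).2.2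
  have hptj₀ : ptime s q f o j₀ ≤ O := by
    refine le_trans ?_ (hwO o)
    rw [load]
    exact Finset.single_le_sum (fun k _ => (hptpos o k).le)
      (mem_filter.mpr ⟨mem_univ j₀, hj₀w⟩)
  have hLoLt : Lt ≤ Lo + O := le_trans (hNE j₀ hj₀t) (by linarith)
  -- main case split : A2 empty or not
  rcases Finset.eq_empty_or_nonempty A2 with hA2e | ⟨js, hjs⟩
  · -- Case I : a' = 0
    have ha'z : a' = 0 := by rw [ha'def, hA2e, sum_empty]
    have hsF1 := mul_le_mul_of_nonneg_left hF1 hs0.le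
    have hk1 : s*Lt + Lo ≤ (s+1)*O := by
      nlinarith only [hsF1, hF2, ha'z, mul_nonneg (show (0:ℝ) ≤ s^2 - 1 by nlinarith only [hs]) hb'0]
    have hk2 : (s+1)*Lt ≤ (s+2)*O := by nlinarith only [hk1, hLoLt]
    have hk3 := mul_le_mul_of_nonneg_left hk2 hss.le
    have hk4 := mul_lt_mul_of_pos_left hcon (show (0:ℝ) < s+1 by linarith)
    nlinarith only [hk3, hk4, mul_nonneg hO0 (show (0:ℝ) ≤ 2*s+1-s^2 by linarith [hs21])]
  · -- Case II : pick j* ∈ A2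
    have hjsmem := hjs
    rw [hA2def] at hjsmem
    obtain ⟨-, hjst, hjsw, hjsf⟩ :
        True ∧ x js = t ∧ w js = o ∧ f js = o := by
      have := mem_filter.mp hjsmem
      exact ⟨trivial, this.2⟩
    have hqsa' : q js ≤ a' := by
      rw [ha'def]
      exact Finset.single_le_sum (fun k _ => (hq k).le) hjs
    have hptjso : ptime s q f o js = q js := hfo' js hjsf
    have hptjst : ptime s q f t js = s * q js := hfo js hjsf
    have hNEjs : Lt ≤ Lo + q js := by
      have := hNE js hjst
      rwa [hptjso] at this
    have hqs0 := (hq js).le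
    -- I1 : s*c ≤ q js - (Lt - Lo)
    have hCmem : ∀ j ∈ Cf, x j = o := by
      rw [hCfdef]; intro j hj; exact (mem_filter.mp hj).2.1
    have hjsA : ∀ k ∈ ({js} : Finset (Fin n)), x k = t := by
      intro k hk; rw [mem_singleton.mp hk]; exact hjst
    have hI1 : s * c ≤ q js - (Lt - Lo) := by
      have hswap := load_swap s q f x t o hto {js} Cf hjsA hCmem
      rcases se_master s q f x hx t o hto {js} Cf hjsA hCmem ⟨js, mem_singleton_self js⟩
        with h | ⟨-, h⟩
      · rw [hswap.2, sum_singleton, hptjso, hCo] at h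
        linarith
      · exfalso
        rw [hswap.1, sum_singleton, hptjst, hCt] at h
        -- h : Lo ≤ Lt - s*q js + c  ⇒ c ≥ s*q js - (Lt-Lo) ≥ (s-1)(Lt-Lo)
        -- then Lo ≥ s*c ≥ (s²-s)(Lt-Lo) > O ≥ Lo
        have h1 : s * (Lt - Lo) ≤ s * q js := mul_le_mul_of_nonneg_left (by linarith) hs0.le
        have h2 : s * (s * q js - (Lt - Lo)) ≤ s * c :=
          mul_le_mul_of_nonneg_left (by linarith) hs0.le
        have h3 := mul_le_mul_of_nonneg_left h1 hs0.le
        nlinarith only [h2, h3, hDelta, hLoid, hd0, hLoO]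
    -- DK dichotomy
    have hDBmem : ∀ j ∈ Df \ B2, x j = o := by
      intro j hj
      have := (Finset.mem_sdiff.mp hj).1
      rw [hDfdef] at this
      exact (mem_filter.mp this).2.1
    have hswapDB := load_swap s q f x t o hto {js} (Df \ B2) hjsA hDBmem
    rcases se_master s q f x hx t o hto {js} (Df \ B2) hjsA hDBmem
      ⟨js, mem_singleton_self js⟩ with h7L | ⟨-, h7R⟩
    · -- 7L : Lt ≤ Lo + q js - (d - b')
      rw [hswapDB.2, sum_singleton, hptjso, hDBo] at h7L
      -- b' ≥ Lt - 2 q js + (Lt - Lo) ... chain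
      have hc1 : b' ≥ Lt - 2*(q js) + (Lt - Lo) := by linarith [hLoid]
      have hc2 : s*b' ≤ O := by linarith [hLtid, he0, hb0, hF1]
      have hc3 : s*(q js) ≤ Lt := by
        have : s * (q js) ≤ s * a' := mul_le_mul_of_nonneg_left hqsa' hs0.le
        linarith [hLtid, ha0, he0]
      have hc4 : (s-2)*Lt + s*((Lt-Lo)) ≤ O := by
        have h5 := mul_le_mul_of_nonneg_left hc1 hs0.le
        nlinarith only [h5, hc2, hc3]
      -- contradiction via (s-1)²(s-2) ≥ 0
      have hm1 := mul_le_mul_of_nonneg_left hcon.le (show (0:ℝ) ≤ s-2 by linarith)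
      have hm2 := mul_lt_mul_of_pos_left hDelta hs0
      have hm3 := mul_le_mul_of_nonneg_left hc4 hss.le
      nlinarith only [hm1, hm2, hm3,
        mul_nonneg hO0 (mul_nonneg (sq_nonneg (s-1)) (show (0:ℝ) ≤ s-2 by linarith))]
    · -- 7R : Lo ≤ Lt - s*q js + s*(d-b')
      rw [hswapDB.1, sum_singleton, hptjst, hDBt] at h7R
      rcases Finset.eq_empty_or_nonempty Kt with hKte | ⟨k, hk⟩
      · -- e = 0
        have hez : e = 0 := by rw [hedef, hKte, sum_empty]
        rcases Finset.eq_empty_or_nonempty (A2 \ {js}) with hA2s | ⟨k2, hk2⟩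
        · -- A2 = {js} : critical branch
          have hA2single : A2 = {js} := by
            have hsub : A2 ⊆ {js} := by
              rw [← Finset.sdiff_eq_empty_iff_subset]; exact hA2s
            exact Finset.Subset.antisymm hsub (Finset.singleton_subset_iff.mpr hjs)
          have ha'qs : a' = q js := by rw [ha'def, hA2single, sum_singleton]
          -- chain : s²a + (2s-1) q js ≤ s O, Lt = a + s q js
          have hch1 : s*a + q js + (d - b') ≤ O := by
            have hsbsc : s*b ≤ s*c := mul_le_mul_of_nonneg_left hbc hs0.le
            linarith [hF2, hLoid, hqsa']
          have hch2 : s*(s*a + q js + (d - b')) ≤ s*O := mul_le_mul_of_nonneg_left hch1 hs0.le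
          have hch3 : s^2*a + 2*s*(q js) - (Lt - Lo) ≤ s*O := by
            nlinarith only [hch2, h7R]
          have hch4 : s^2*a + (2*s-1)*(q js) ≤ s*O := by
            nlinarith only [hch3, hNEjs]
          have hLtaq : Lt = a + s*(q js) := by rw [hLtid, ha'qs, hez]; ring
          have hch5 : (2*s-1)*Lt ≤ s^2*O := by
            have h6 := mul_le_mul_of_nonneg_left hch4 hs0.le
            have h7 : (2*s-1)*Lt = (2*s-1)*a + s*((2*s-1)*(q js)) := by
              rw [hLtaq]; ring
            nlinarith only [h6, h7,
              mul_nonneg (show (0:ℝ) ≤ s^3-2*s+1 by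
                nlinarith only [hs, sq_nonneg (2*s-1),
                  mul_nonneg (mul_nonneg (show (0:ℝ) ≤ s-2 by linarith)
                    (show (0:ℝ) ≤ s by linarith)) (show (0:ℝ) ≤ s by linarith)]) ha0]
          -- contradiction via quartic
          have hm1 := mul_le_mul_of_nonneg_left hch5 hss.le
          have hm2 := mul_lt_mul_of_pos_left hcon (show (0:ℝ) < 2*s-1 by linarith)
          nlinarith only [hm1, hm2, mul_nonneg hO0
            (show (0:ℝ) ≤ (2*s-1)*(s^2-s+1) - s^2*(s^2-s) by nlinarith only [hq4])]
        · -- second job in A2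
          have hk2A2 : k2 ∈ A2 := (Finset.mem_sdiff.mp hk2).1
          have hk2ne : k2 ≠ js := by
            have := (Finset.mem_sdiff.mp hk2).2
            simpa using this
          have hk2mem := hk2A2
          rw [hA2def] at hk2mem
          have hk2p := (mem_filter.mp hk2mem).2
          have hNEk2 : Lt ≤ Lo + q k2 := by
            have := hNE k2 hk2p.1
            rwa [hfo' k2 hk2p.2.2] at this
          have hpairsub : ({js, k2} : Finset (Fin n)) ⊆ A2 := by
            intro z hz
            rcases Finset.mem_insert.mp hz with h | h
            · rwa [h]
            · rw [Finset.mem_singleton.mp h]; exact hk2A2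
          have hpair : q js + q k2 ≤ a' := by
            rw [ha'def]
            calc q js + q k2 = ∑ z ∈ ({js, k2} : Finset (Fin n)), q z := by
                  rw [Finset.sum_pair (Ne.symm hk2ne)]
              _ ≤ ∑ j ∈ A2, q j :=
                  Finset.sum_le_sum_of_subset_of_nonneg hpairsub (fun z _ _ => (hq z).le)
          -- I10 via (A2, Bt)
          have hA2mem : ∀ j ∈ A2, x j = t := by
            rw [hA2def]; intro j hj; exact (mem_filter.mp hj).2.1
          have hswapA2 := load_swap s q f x t o hto A2 Bt hA2mem hBmem
          have hI10 : s * a' ≤ (Lt - Lo) + (b + s*b') := by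
            rcases se_master s q f x hx t o hto A2 Bt hA2mem hBmem ⟨js, hjs⟩
              with h | ⟨-, h⟩
            · exfalso
              rw [hswapA2.2, hA2o, hBto] at h
              -- Lt ≤ Lo + a' - (s b + b') ⇒ with F2 : Lo + (Lt-Lo) ≤ O
              linarith [hF2, mul_nonneg hs0.le ha0, ha0]
            · rw [hswapA2.1, hA2t, hBtt] at h
              linarith
          have hbsb : b + s*b' ≤ O := by linarith [hF1, hLtid, hez]
          -- (2s-1) Δ ≤ O
          have hDq : Lt - Lo ≤ q js := by linarith
          have hDq2 : Lt - Lo ≤ q k2 := by linarith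
          have h2sD : s*(2*(Lt-Lo)) ≤ s*a' := by
            apply mul_le_mul_of_nonneg_left _ hs0.le
            linarith
          have hfin : (2*s-1)*(Lt-Lo) ≤ O := by
            nlinarith only [hI10, hbsb, h2sD, hDq, hDq2]
          nlinarith only [hfin, hDelta,
            mul_nonneg (show (0:ℝ) ≤ (2*s-1)-(s^2-s) by linarith [hs31])
              (show (0:ℝ) ≤ Lt-Lo by linarith [hlo])]
      · -- kept job exists : s e ≥ Δ
        have hkmem := hk
        rw [hKtdef] at hkmem
        have hkp := (mem_filter.mp hkmem).2
        have hNEk : Lt ≤ Lo + ptime s q f o k := hNE k hkp.1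
        have hpte : ptime s q f t k ≤ e := by
          rw [hedef]
          exact Finset.single_le_sum (fun z _ => (hptpos t z).le) hk
        have hptle := ptime_le s q f hs hq t o k
        have hseD : Lt - Lo ≤ s * e := by
          have := mul_le_mul_of_nonneg_left hpte hs0.le
          linarith
        -- W1 : d - b' ≤ O - q js ; W2 : d ≥ Lo - (q js - Δ) ; ⇒ b' ≥ Lt - O
        have hW1 : d - b' ≤ O - q js := by
          have hsbsc : s*b ≤ s*c := mul_le_mul_of_nonneg_left hbc hs0.le
          linarith [hF2, hLoid, hqsa', mul_nonneg hs0.le ha0]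
        have hW2 : Lo - (q js - (Lt - Lo)) ≤ d := by linarith [hLoid, hI1]
        have hW3 : Lt - O ≤ b' := by linarith
        -- F1 chain : b + s b' + e ≤ O
        have hbse : b + s*b' + e ≤ O := by linarith [hF1, hLtid]
        have hm0 : s*(Lt - O) ≤ s*b' := mul_le_mul_of_nonneg_left hW3 hs0.le
        have hm1 : s*(b + s*b' + e) ≤ s*O := mul_le_mul_of_nonneg_left hbse hs0.le
        have hm2 : s^2*Lt + (Lt - Lo) ≤ (s^2+s)*O := by
          have hm0' := mul_le_mul_of_nonneg_left hm0 hs0.le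
          nlinarith only [hm0', hm1, hseD, mul_nonneg hs0.le hb0]
        -- contradiction via s³-2s²-1 ≤ 0
        have hn1 := mul_le_mul_of_nonneg_left hm2 hss.le
        have hn2 := mul_le_mul_of_nonneg_left hcon.le (show (0:ℝ) ≤ s^2 by positivity)
        nlinarith only [hn1, hn2, hDelta, mul_nonneg hO0
          (show (0:ℝ) ≤ 2*s^2+1-s^3 by linarith [hs32])]

theorem spoa_upper_interval6
    (s₆ : ℝ) (hs₆lo : 2 < s₆) (hs₆hi : s₆ < 3)
    (hs₆root : s₆^4 - 3*s₆^3 + 3*s₆^2 - 3*s₆ + 1 = 0)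
    (s : ℝ) (hs : 2 ≤ s) (hs' : s ≤ s₆)
    {n : ℕ} (q : Fin n → ℝ) (hq : ∀ j, 0 < q j)
    (f : Fin n → Fin 2) (x : Fin n → Fin 2) (hx : IsSE s q f x) :
    makespan s q f x ≤ ((s^2 - s + 1)/(s^2 - s)) * optMakespan s q f := by
  have hq4 : s^4 - 3*s^3 + 3*s^2 - 3*s + 1 ≤ 0 := by
    have h3 : s < 3 := lt_of_le_of_lt hs' hs₆hi
    have hQ : 0 ≤ s^3 + s^2*s₆ + s*s₆^2 + s₆^3 - 3*(s^2 + s*s₆ + s₆^2) + 3*(s+s₆) - 3 := by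
      nlinarith [mul_nonneg (sub_nonneg.2 hs) (sub_nonneg.2 hs₆lo.le),
        mul_nonneg (mul_nonneg (sub_nonneg.2 hs) (sub_nonneg.2 hs)) (sub_nonneg.2 hs₆lo.le),
        mul_nonneg (sub_nonneg.2 hs) (mul_nonneg (sub_nonneg.2 hs₆lo.le) (sub_nonneg.2 hs₆lo.le)),
        sq_nonneg (s - 2), sq_nonneg (s₆ - 2),
        mul_nonneg (sub_nonneg.2 h3.le) (sub_nonneg.2 hs₆lo.le)]
    have hid : s^4 - 3*s^3 + 3*s^2 - 3*s + 1
        = (s₆^4 - 3*s₆^3 + 3*s₆^2 - 3*s₆ + 1)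
          + (s - s₆) * (s^3 + s^2*s₆ + s*s₆^2 + s₆^3 - 3*(s^2 + s*s₆ + s₆^2) + 3*(s+s₆) - 3) := by
      ring
    rw [hid, hs₆root]
    have := mul_nonpos_of_nonpos_of_nonneg (sub_nonpos.2 hs') hQ
    linarith
  have hss : (0:ℝ) < s^2 - s := by nlinarith
  obtain ⟨w, hw⟩ := Finite.exists_min (fun z : Fin n → Fin 2 => makespan s q f z)
  have hms0 : ∀ z : Fin n → Fin 2, 0 ≤ makespan s q f z := by
    intro z
    refine le_trans ?_ (le_max_left _ _)
    exact Finset.sum_nonneg fun j _ => (ptime_pos s q f hs hq 0 j).le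
  have hopt : optMakespan s q f = makespan s q f w := by
    refine le_antisymm ?_ (le_ciInf hw)
    refine ciInf_le ⟨0, ?_⟩ w
    rintro v ⟨z, rfl⟩
    exact hms0 z
  have hwO : ∀ i : Fin 2, load s q f w i ≤ makespan s q f w := by
    intro i
    have h01 : i = 0 ∨ i = 1 := by
      have := i.isLt
      rcases Nat.lt_or_ge i.val 1 with h | h
      · exact Or.inl (Fin.ext (by omega))
      · exact Or.inr (Fin.ext (by omega))
    rcases h01 with h | h <;> subst h
    · exact le_max_left _ _
    · exact le_max_right _ _
  rw [makespan, hopt]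
  rcases le_total (load s q f x 0) (load s q f x 1) with h | h
  · have hcore := core s hs hq4 q hq f x hx (makespan s q f w) w hwO 1 0 (by decide) h
    have h1 : load s q f x 1 ≤ (s^2 - s + 1)/(s^2 - s) * makespan s q f w := by
      rw [div_mul_eq_mul_div, le_div_iff₀ hss]
      nlinarith [hcore]
    exact max_le (le_trans h h1) h1
  · have hcore := core s hs hq4 q hq f x hx (makespan s q f w) w hwO 0 1 (by decide) h
    have h1 : load s q f x 0 ≤ (s^2 - s + 1)/(s^2 - s) * makespan s q f w := by
      rw [div_mul_eq_mul_div, le_div_iff₀ hss]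
      nlinarith [hcore]
    exact max_le h1 (le_trans h h1)
end

section
/- Let s₆ ≈ 2.154 be the unique root in the interval (2,3) of s⁴ − 3s³ + 3s² − 3s + 1 = 0, and let s₇ ≈ 2.247 be the unique root in the interval (2,3) of s³ − 2s² − s + 1 = 0. Fix a real s with s₆ ≤ s ≤ s₇ and consider the instance of the favorite-machine scheduling game on two machines with parameter s consisting of three jobs: A of size s/(2s − 1) with favorite machine 2; D of size (s − 1)²/(2s − 1) with favorite machine 2; and E of size (s − 1)/(2s − 1) with favorite machine 2. Then the allocation assigning A to machine 1 and D, E to machine 2 is a strong equilibrium whose makespan equals s²/(2s − 1), while the optimal makespan of this instance is at most 1. Consequently, the strong price of anarchy at parameter s is at least s²/(2s − 1). -/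
open Finset

lemma fin2_cases (i : Fin 2) : i = 0 ∨ i = 1 := by omega

lemma load_eq3 (s : ℝ) (q : Fin 3 → ℝ) (f : Fin 3 → Fin 2) (x : Fin 3 → Fin 2) (i : Fin 2) :
    load s q f x i = (if x 0 = i then ptime s q f i 0 else 0)
      + (if x 1 = i then ptime s q f i 1 else 0)
      + (if x 2 = i then ptime s q f i 2 else 0) := by
  rw [load, Finset.sum_filter, Fin.sum_univ_three]

set_option maxHeartbeats 1000000 in
theorem spoa_lower_interval7
    (s₆ : ℝ) (hs₆lo : 2 < s₆) (hs₆hi : s₆ < 3)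
    (hs₆root : s₆^4 - 3*s₆^3 + 3*s₆^2 - 3*s₆ + 1 = 0)
    (s₇ : ℝ) (hs₇lo : 2 < s₇) (hs₇hi : s₇ < 3)
    (hs₇root : s₇^3 - 2*s₇^2 - s₇ + 1 = 0)
    (s : ℝ) (hs : s₆ ≤ s) (hs' : s ≤ s₇)
    (q : Fin 3 → ℝ) (hq : q = ![s/(2*s - 1), (s - 1)^2/(2*s - 1), (s - 1)/(2*s - 1)])
    (f : Fin 3 → Fin 2) (hf : f = ![1, 1, 1])
    (x : Fin 3 → Fin 2) (hx : x = ![0, 1, 1]) :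
    IsSE s q f x ∧
      makespan s q f x = s^2/(2*s - 1) ∧
      optMakespan s q f ≤ 1 ∧
      (s^2/(2*s - 1)) * optMakespan s q f ≤ makespan s q f x := by
  subst hq hf hx
  have h2 : (2:ℝ) < s := lt_of_lt_of_le hs₆lo hs
  have h3 : s < 3 := lt_of_le_of_lt hs' hs₇hi
  have hd : (0:ℝ) < 2*s-1 := by linarith
  have hne : (2*s-1) ≠ 0 := ne_of_gt hd
  -- IsSE
  have hSE : IsSE s ![s/(2*s - 1), (s - 1)^2/(2*s - 1), (s - 1)/(2*s - 1)] ![1,1,1] ![0,1,1] := by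
    intro y hy
    rcases fin2_cases (y 0) with h0 | h0 <;>
    rcases fin2_cases (y 1) with h1 | h1 <;>
    rcases fin2_cases (y 2) with h2' | h2'
    · -- (0,0,0) witness D
      refine ⟨1, by simp [h1], ?_⟩
      rw [h1, load_eq3, load_eq3]
      simp [h0, h1, h2', ptime]
      field_simp
      rw [div_le_div_iff₀ (by linarith) (by linarith)]; nlinarith
    · -- (0,0,1) witness D
      refine ⟨1, by simp [h1], ?_⟩
      rw [h1, load_eq3, load_eq3]
      simp [h0, h1, h2', ptime]
      field_simp
      rw [div_le_div_iff₀ (by linarith) (by linarith)]; nlinarith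
    · -- (0,1,0) witness E
      refine ⟨2, by simp [h2'], ?_⟩
      rw [h2', load_eq3, load_eq3]
      simp [h0, h1, h2', ptime]
      field_simp
      rw [div_le_div_iff₀ (by linarith) (by linarith)]; nlinarith [mul_nonneg (mul_nonneg (by linarith : (0:ℝ) ≤ s) hd.le) (by linarith : (0:ℝ) ≤ s)]
    · -- (0,1,1) = x: contradiction
      exfalso
      obtain ⟨j, hj⟩ := hy
      fin_cases j <;> simp_all
    · -- (1,0,0) witness D
      refine ⟨1, by simp [h1], ?_⟩
      rw [h1, load_eq3, load_eq3]
      simp [h0, h1, h2', ptime]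
      field_simp
      rw [div_le_div_iff₀ (by linarith) (by linarith)]; nlinarith [mul_nonneg (mul_nonneg (sq_nonneg (s-1)) (by linarith : (0:ℝ) ≤ s)) hd.le]
    · -- (1,0,1) witness D
      refine ⟨1, by simp [h1], ?_⟩
      rw [h1, load_eq3, load_eq3]
      simp [h0, h1, h2', ptime]
      field_simp
      rw [div_le_div_iff₀ (by linarith) (by linarith)]
      nlinarith [mul_nonneg (mul_nonneg (mul_nonneg (by linarith : (0:ℝ) ≤ s) (by linarith : (0:ℝ) ≤ s-1)) (by linarith : (0:ℝ) ≤ s-2)) (le_of_lt hd)]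
    · -- (1,1,0) witness E
      refine ⟨2, by simp [h2'], ?_⟩
      rw [h2', load_eq3, load_eq3]
      simp [h0, h1, h2', ptime]
      field_simp
      rw [div_le_div_iff₀ (by linarith) (by linarith)]; nlinarith
    · -- (1,1,1) witness A
      refine ⟨0, by simp [h0], ?_⟩
      rw [h0, load_eq3, load_eq3]
      simp [h0, h1, h2', ptime]
      field_simp
      rw [div_le_div_iff₀ (by linarith) (by linarith)]; nlinarith
  -- makespan of x
  have hL0 : load s ![s/(2*s - 1), (s - 1)^2/(2*s - 1), (s - 1)/(2*s - 1)] ![1,1,1] ![0,1,1] 0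
      = s^2/(2*s-1) := by
    rw [load_eq3]; simp [ptime]; field_simp
  have hL1 : load s ![s/(2*s - 1), (s - 1)^2/(2*s - 1), (s - 1)/(2*s - 1)] ![1,1,1] ![0,1,1] 1
      = (s^2-s)/(2*s-1) := by
    rw [load_eq3]; simp [ptime]; field_simp; ring
  have hmx : makespan s ![s/(2*s - 1), (s - 1)^2/(2*s - 1), (s - 1)/(2*s - 1)] ![1,1,1] ![0,1,1]
      = s^2/(2*s-1) := by
    rw [makespan, hL0, hL1, max_eq_left]
    rw [div_le_div_iff₀ hd hd]; nlinarith
  -- optimum ≤ 1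
  have hqn : ∀ j : Fin 3, 0 ≤ (![s/(2*s - 1), (s - 1)^2/(2*s - 1), (s - 1)/(2*s - 1)] : Fin 3 → ℝ) j := by
    intro j
    fin_cases j <;> simp <;> apply div_nonneg <;> nlinarith
  have hload : ∀ (y : Fin 3 → Fin 2) (i : Fin 2),
      0 ≤ load s ![s/(2*s - 1), (s - 1)^2/(2*s - 1), (s - 1)/(2*s - 1)] ![1,1,1] y i := by
    intro y i
    apply Finset.sum_nonneg
    intro j _
    unfold ptime
    split
    · exact hqn j
    · exact mul_nonneg (by linarith) (hqn j)
  have hbdd : BddBelow (Set.range fun y : Fin 3 → Fin 2 =>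
      makespan s ![s/(2*s - 1), (s - 1)^2/(2*s - 1), (s - 1)/(2*s - 1)] ![1,1,1] y) := by
    refine ⟨0, ?_⟩
    rintro r ⟨y, rfl⟩
    exact le_trans (hload y 0) (le_max_left _ _)
  have hopt : optMakespan s ![s/(2*s - 1), (s - 1)^2/(2*s - 1), (s - 1)/(2*s - 1)] ![1,1,1] ≤ 1 := by
    have hcube : s^3 - 2*s^2 - s + 1 ≤ 0 := by
      have hF : (0:ℝ) ≤ s₇*(s₇-2) + s*(s-2) + (s*s₇ - 1) := by nlinarith
      nlinarith [mul_nonneg (sub_nonneg.mpr hs') hF]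
    refine le_trans (ciInf_le hbdd ![1,0,1]) ?_
    rw [makespan, load_eq3, load_eq3]
    simp [ptime]
    constructor
    · rw [← mul_div_assoc, div_le_one hd]; nlinarith
    · field_simp
      rw [div_le_one (by linarith)]; nlinarith
  refine ⟨hSE, hmx, hopt, ?_⟩
  rw [hmx]
  calc (s^2/(2*s-1)) * optMakespan s ![s/(2*s - 1), (s - 1)^2/(2*s - 1), (s - 1)/(2*s - 1)] ![1,1,1]
      ≤ (s^2/(2*s-1)) * 1 := by
        apply mul_le_mul_of_nonneg_left hopt
        positivity
    _ = s^2/(2*s-1) := by ring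
end
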